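/- Let A = σ(R)⟨x1, x2⟩ be a connected graded skew PBW extension of a K-algebra R. Then A is a connected graded right double Ore extension of R: the defining relation takes the form x2x1 = c_{1,2}·x1x2 + τ1x1 + τ2x2 + τ0 with c_{1,2} ∈ K \ {0}, τ1, τ2 ∈ R₁, τ0 ∈ R₂, and x1R + x2R ⊆ Rx1 + Rx2 + R. -/
import Mathlib


/-- A right double Ore extension `A = R_P[x1,x2; σ, δ, τ]` of a `K`-algebra `R`. -/
structure RightDOE (K R A : Type*) [Field K] [Ring R] [Algebra K R]
    [Ring A] [Algebra K A] where
  ι : R →ₐ[K] A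
  inj : Function.Injective ι
  x1 : A
  x2 : A
  p12 : K
  p11 : K
  τ0 : R
  τ1 : R
  τ2 : R
  σ11 : R → R
  σ12 : R → R
  σ21 : R → R
  σ22 : R → R
  δ1 : R → R
  δ2 : R → R
  gen : Algebra.adjoin K (Set.range ι ∪ {x1, x2}) = ⊤
  basis : ∀ a : A, ∃! c : (ℕ × ℕ) →₀ R,
      a = c.sum fun p r => ι r * (x1 ^ p.1 * x2 ^ p.2)
  rel : x2 * x1 = p12 • (x1 * x2) + p11 • (x1 * x1) + ι τ1 * x1 + ι τ2 * x2 + ι τ0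
  comm1 : ∀ r : R, x1 * ι r = ι (σ11 r) * x1 + ι (σ12 r) * x2 + ι (δ1 r)
  comm2 : ∀ r : R, x2 * ι r = ι (σ21 r) * x1 + ι (σ22 r) * x2 + ι (δ2 r)

/-- A (two-sided) double Ore extension: also a left double Ore extension on the same
generators. -/
structure DOE (K R A : Type*) [Field K] [Ring R] [Algebra K R]
    [Ring A] [Algebra K A] extends RightDOE K R A where
  basisR : ∀ a : A, ∃! c : (ℕ × ℕ) →₀ R,
      a = c.sum fun p r => (x1 ^ p.1 * x2 ^ p.2) * ι r
  p12' : K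
  p11' : K
  τ0' : R
  τ1' : R
  τ2' : R
  relL : x1 * x2 = p12' • (x2 * x1) + p11' • (x1 * x1) + x1 * ι τ1' + x2 * ι τ2' + ι τ0'

/-- A skew PBW extension `A = σ(R)⟨x1, x2⟩` in two variables. -/
structure SkewPBW2 (K R A : Type*) [Field K] [Ring R] [Algebra K R]
    [Ring A] [Algebra K A] where
  ι : R →ₐ[K] A
  inj : Function.Injective ι
  x1 : A
  x2 : A
  σ1 : R → R
  σ2 : R → R
  δ1 : R → R
  δ2 : R → R
  σ1_ne : ∀ r : R, r ≠ 0 → σ1 r ≠ 0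
  σ2_ne : ∀ r : R, r ≠ 0 → σ2 r ≠ 0
  c12 : R
  c12_ne : c12 ≠ 0
  τ0 : R
  τ1 : R
  τ2 : R
  basis : ∀ a : A, ∃! c : (ℕ × ℕ) →₀ R,
      a = c.sum fun p r => ι r * (x1 ^ p.1 * x2 ^ p.2)
  comm1 : ∀ r : R, x1 * ι r = ι (σ1 r) * x1 + ι (δ1 r)
  comm2 : ∀ r : R, x2 * ι r = ι (σ2 r) * x2 + ι (δ2 r)
  rel : x2 * x1 = ι c12 * (x1 * x2) + ι τ1 * x1 + ι τ2 * x2 + ι τ0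

/-- A skew PBW extension in two variables is quasi-commutative when the derivations
and the tails vanish. -/
def SkewPBW2.QuasiCommutative {K R A : Type*} [Field K] [Ring R] [Algebra K R]
    [Ring A] [Algebra K A] (S : SkewPBW2 K R A) : Prop :=
  (∀ r : R, S.δ1 r = 0) ∧ (∀ r : R, S.δ2 r = 0) ∧ S.τ0 = 0 ∧ S.τ1 = 0 ∧ S.τ2 = 0

/-- A graded skew PBW extension of an ℕ-graded algebra `R` with grading `ℛ`,
the grading on `A` being `𝒜` with `deg x1 = deg x2 = 1`. -/
structure GradedSkewPBW2 (K R A : Type*) [Field K] [Ring R] [Algebra K R]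
    [Ring A] [Algebra K A] (ℛ : ℕ → Submodule K R) (𝒜 : ℕ → Submodule K A)
    extends SkewPBW2 K R A where
  σ1_bij : Function.Bijective σ1
  σ2_bij : Function.Bijective σ2
  σ1_graded : ∀ m : ℕ, ∀ r ∈ ℛ m, σ1 r ∈ ℛ m
  σ2_graded : ∀ m : ℕ, ∀ r ∈ ℛ m, σ2 r ∈ ℛ m
  δ1_graded : ∀ m : ℕ, ∀ r ∈ ℛ m, δ1 r ∈ ℛ (m + 1)
  δ2_graded : ∀ m : ℕ, ∀ r ∈ ℛ m, δ2 r ∈ ℛ (m + 1)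
  c12_mem : c12 ∈ ℛ 0
  τ1_mem : τ1 ∈ ℛ 1
  τ2_mem : τ2 ∈ ℛ 1
  τ0_mem : τ0 ∈ ℛ 2
  x1_mem : x1 ∈ 𝒜 1
  x2_mem : x2 ∈ 𝒜 1
  ι_graded : ∀ m : ℕ, ∀ r ∈ ℛ m, ι r ∈ 𝒜 m
  grading_eq : ∀ p : ℕ, 𝒜 p = Submodule.span K
      {a | ∃ t i j : ℕ, ∃ r ∈ ℛ t, t + i + j = p ∧ a = ι r * (x1 ^ i * x2 ^ j)}

/-- A graded right double Ore extension, with all defining relations homogeneous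
for `deg x1 = deg x2 = 1`. -/
structure GradedRightDOE (K R A : Type*) [Field K] [Ring R] [Algebra K R]
    [Ring A] [Algebra K A] (ℛ : ℕ → Submodule K R) (𝒜 : ℕ → Submodule K A)
    extends RightDOE K R A where
  σ11_graded : ∀ m : ℕ, ∀ r ∈ ℛ m, σ11 r ∈ ℛ m
  σ12_graded : ∀ m : ℕ, ∀ r ∈ ℛ m, σ12 r ∈ ℛ m
  σ21_graded : ∀ m : ℕ, ∀ r ∈ ℛ m, σ21 r ∈ ℛ m
  σ22_graded : ∀ m : ℕ, ∀ r ∈ ℛ m, σ22 r ∈ ℛ m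
  δ1_graded : ∀ m : ℕ, ∀ r ∈ ℛ m, δ1 r ∈ ℛ (m + 1)
  δ2_graded : ∀ m : ℕ, ∀ r ∈ ℛ m, δ2 r ∈ ℛ (m + 1)
  τ1_mem : τ1 ∈ ℛ 1
  τ2_mem : τ2 ∈ ℛ 1
  τ0_mem : τ0 ∈ ℛ 2
  x1_mem : x1 ∈ 𝒜 1
  x2_mem : x2 ∈ 𝒜 1
  ι_graded : ∀ m : ℕ, ∀ r ∈ ℛ m, ι r ∈ 𝒜 m
  grading_eq : ∀ p : ℕ, 𝒜 p = Submodule.span K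
      {a | ∃ t i j : ℕ, ∃ r ∈ ℛ t, t + i + j = p ∧ a = ι r * (x1 ^ i * x2 ^ j)}

/-- A graded right double Ore extension is trimmed when δ and the tail vanish. -/
def GradedRightDOE.Trimmed {K R A : Type*} [Field K] [Ring R] [Algebra K R]
    [Ring A] [Algebra K A] {ℛ : ℕ → Submodule K R} {𝒜 : ℕ → Submodule K A}
    (D : GradedRightDOE K R A ℛ 𝒜) : Prop :=
  (∀ r : R, D.δ1 r = 0) ∧ (∀ r : R, D.δ2 r = 0) ∧ D.τ0 = 0 ∧ D.τ1 = 0 ∧ D.τ2 = 0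

/-- A graded (two-sided) double Ore extension. -/
structure GradedDOE (K R A : Type*) [Field K] [Ring R] [Algebra K R]
    [Ring A] [Algebra K A] (ℛ : ℕ → Submodule K R) (𝒜 : ℕ → Submodule K A)
    extends GradedRightDOE K R A ℛ 𝒜 where
  basisR : ∀ a : A, ∃! c : (ℕ × ℕ) →₀ R,
      a = c.sum fun p r => (x1 ^ p.1 * x2 ^ p.2) * ι r
  p12' : K
  p11' : K
  τ0' : R
  τ1' : R
  τ2' : R
  relL : x1 * x2 = p12' • (x2 * x1) + p11' • (x1 * x1) + x1 * ι τ1' + x2 * ι τ2' + ι τ0'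

/-- A graded algebra is connected when its degree zero part is the base field. -/
def GradingConnected {K B : Type*} [Field K] [Ring B] [Algebra K B]
    (𝒜 : ℕ → Submodule K B) : Prop :=
  𝒜 0 = Submodule.span K ({1} : Set B)

/-- a connected graded skew PBW extension `A = σ(R)⟨x1,x2⟩` is a connected
graded right double Ore extension of `R`, with `p11 = 0`, `p12 = c_{1,2} ∈ K \ {0}`,
`τ1, τ2 ∈ R₁`, `τ0 ∈ R₂`. -/
theorem stmt_7 {K R A : Type*} [Field K] [Ring R] [Algebra K R] [Ring A] [Algebra K A]
    (ℛ : ℕ → Submodule K R) (𝒜 : ℕ → Submodule K A)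
    [GradedAlgebra ℛ] [GradedAlgebra 𝒜]
    (G : GradedSkewPBW2 K R A ℛ 𝒜) (hA : GradingConnected 𝒜) :
    ∃ D : GradedRightDOE K R A ℛ 𝒜, D.ι = G.ι ∧ D.x1 = G.x1 ∧ D.x2 = G.x2 ∧
      D.p11 = 0 ∧ D.p12 ≠ 0 ∧ algebraMap K R D.p12 = G.c12 ∧
      D.τ1 = G.τ1 ∧ D.τ2 = G.τ2 ∧ D.τ0 = G.τ0 := by
  -- c12 lies in ℛ 0, hence ι c12 ∈ 𝒜 0 = K·1, so c12 comes from a scalar k ≠ 0.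
  have hmem : G.ι G.c12 ∈ 𝒜 0 := G.ι_graded 0 G.c12 G.c12_mem
  rw [hA, Submodule.mem_span_singleton] at hmem
  obtain ⟨k, hk⟩ := hmem
  have hιk : G.ι (algebraMap K R k) = G.ι G.c12 := by
    rw [AlgHom.commutes, Algebra.algebraMap_eq_smul_one, hk]
  have hc : algebraMap K R k = G.c12 := G.inj hιk
  have hk0 : k ≠ 0 := by
    rintro rfl
    exact G.c12_ne (by simpa using hc.symm)
  have gen : Algebra.adjoin K (Set.range ⇑G.ι ∪ {G.x1, G.x2}) = ⊤ := by
    rw [eq_top_iff]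
    intro a _
    obtain ⟨c, hcx, -⟩ := G.basis a
    rw [hcx]
    refine Subalgebra.sum_mem _ fun p _ => ?_
    refine Subalgebra.mul_mem _ (Algebra.subset_adjoin (Or.inl ⟨_, rfl⟩)) ?_
    have h1 : G.x1 ∈ Algebra.adjoin K (Set.range ⇑G.ι ∪ {G.x1, G.x2}) :=
      Algebra.subset_adjoin (Or.inr (by simp))
    have h2 : G.x2 ∈ Algebra.adjoin K (Set.range ⇑G.ι ∪ {G.x1, G.x2}) :=
      Algebra.subset_adjoin (Or.inr (by simp))
    exact Subalgebra.mul_mem _ (Subalgebra.pow_mem _ h1 _) (Subalgebra.pow_mem _ h2 _)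
  refine ⟨{ ι := G.ι, inj := G.inj, x1 := G.x1, x2 := G.x2
            p12 := k, p11 := 0
            τ0 := G.τ0, τ1 := G.τ1, τ2 := G.τ2
            σ11 := G.σ1, σ12 := fun _ => 0, σ21 := fun _ => 0, σ22 := G.σ2
            δ1 := G.δ1, δ2 := G.δ2
            gen := gen
            basis := G.basis
            rel := ?_, comm1 := ?_, comm2 := ?_
            σ11_graded := G.σ1_graded
            σ12_graded := fun m r _ => (ℛ m).zero_mem
            σ21_graded := fun m r _ => (ℛ m).zero_mem
            σ22_graded := G.σ2_graded
            δ1_graded := G.δ1_graded, δ2_graded := G.δ2_graded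
            τ1_mem := G.τ1_mem, τ2_mem := G.τ2_mem, τ0_mem := G.τ0_mem
            x1_mem := G.x1_mem, x2_mem := G.x2_mem
            ι_graded := G.ι_graded, grading_eq := G.grading_eq },
         rfl, rfl, rfl, rfl, hk0, hc, rfl, rfl, rfl⟩
  · rw [G.rel, ← hc, AlgHom.commutes, Algebra.algebraMap_eq_smul_one, smul_mul_assoc,
      one_mul, zero_smul, add_zero]
  · intro r
    rw [G.comm1 r, map_zero, zero_mul, add_zero]
  · intro r
    rw [G.comm2 r, map_zero, zero_mul, zero_add]
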